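/- If K ⊂ ℝ^D is a nonempty compact set that is not homotopy equivalent to a point (i.e. K is not contractible), then τ_K ≤ sqrt(D/(2(D+1))) · diam(K). -/

import Mathlib

open Metric Set ENNReal

noncomputable section

abbrev Euc (D : ℕ) := EuclideanSpace ℝ (Fin D)

variable {D : ℕ}

/-- The medial axis of a set `A ⊆ ℝ^D`: points having at least two nearest points on `A`. -/
def medialAxis (A : Set (Euc D)) : Set (Euc D) :=
  {z | ∃ p ∈ A, ∃ q ∈ A, p ≠ q ∧ dist p z = Metric.infDist z A ∧ dist q z = Metric.infDist z A}

/-- The reach of `A ⊆ ℝ^D` (with value `∞` when the medial axis is empty). -/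
def reach (A : Set (Euc D)) : ℝ≥0∞ :=
  ⨅ z ∈ medialAxis A, ENNReal.ofReal (Metric.infDist z A)


/-- Carathéodory with padding to exactly `D+1` points. -/
lemma pad_rep (T : Set (Euc D)) {t0 : Euc D} (ht0 : t0 ∈ T) {x : Euc D}
    (hx : x ∈ convexHull ℝ T) :
    ∃ (w : Fin (D + 1) → ℝ) (p : Fin (D + 1) → Euc D), (∀ i, 0 ≤ w i) ∧ (∑ i, w i = 1)
      ∧ (∀ i, p i ∈ T) ∧ ∑ i, w i • p i = x := by
  classical
  obtain ⟨ι, hfin, zf, wf, hrange, hind, hpos, hsum, hcomb⟩ :=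
    eq_pos_convex_span_of_mem_convexHull hx
  have hcard : Fintype.card ι ≤ D + 1 := by
    have h1 := hind.card_le_finrank_succ
    have h2 : Module.finrank ℝ ↥(vectorSpan ℝ (Set.range zf)) ≤ D := by
      have := Submodule.finrank_le (vectorSpan ℝ (Set.range zf))
      simpa [finrank_euclideanSpace_fin] using this
    omega
  obtain ⟨e⟩ : Nonempty (ι ↪ Fin (D + 1)) := by
    refine ⟨(Fintype.equivFin ι).toEmbedding.trans (Fin.castLEEmb hcard)⟩
  set w : Fin (D + 1) → ℝ := Function.extend e wf (fun _ => (0:ℝ)) with hw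
  set p : Fin (D + 1) → Euc D := Function.extend e zf (fun _ => t0) with hp
  have hwe : ∀ i, w (e i) = wf i := fun i => e.injective.extend_apply wf _ i
  have hpe : ∀ i, p (e i) = zf i := fun i => e.injective.extend_apply zf _ i
  have hwnot : ∀ j, (¬∃ i, e i = j) → w j = 0 := fun j hj => Function.extend_apply' wf _ j hj
  -- generic reduction of sums to the range of `e`
  have hsub : ∀ {M : Type} [AddCommMonoid M] (f : Fin (D+1) → M),
      (∀ j, (¬∃ i, e i = j) → f j = 0) → ∑ j, f j = ∑ i, f (e i) := by
    intro M _ f hf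
    have h1 : ∑ j ∈ Finset.univ.image e, f j = ∑ j : Fin (D + 1), f j := by
      apply Finset.sum_subset (Finset.subset_univ _)
      intro j _ hj
      apply hf
      rintro ⟨i, rfl⟩
      exact hj (Finset.mem_image.mpr ⟨i, Finset.mem_univ i, rfl⟩)
    have h2 : ∑ j ∈ Finset.univ.image e, f j = ∑ i : ι, f (e i) :=
      Finset.sum_image (fun a _ b _ h => e.injective h)
    rw [← h1, h2]
  refine ⟨w, p, ?_, ?_, ?_, ?_⟩
  · intro j
    by_cases hj : ∃ i, e i = j
    · obtain ⟨i, rfl⟩ := hj; rw [hwe]; exact (hpos i).le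
    · rw [hwnot j hj]
  · rw [hsub w hwnot]
    simpa only [hwe] using hsum
  · intro j
    by_cases hj : ∃ i, e i = j
    · obtain ⟨i, rfl⟩ := hj; rw [hpe]; exact hrange ⟨i, rfl⟩
    · rw [hp, Function.extend_apply' zf _ j hj]; exact ht0
  · rw [hsub (fun j => w j • p j) (fun j hj => by show w j • p j = 0; rw [hwnot j hj, zero_smul])]
    simp only [hwe, hpe]
    exact hcomb

lemma isCompact_convexHull_euc {T : Set (Euc D)} (hT : IsCompact T) (hTne : T.Nonempty) :
    IsCompact (convexHull ℝ T) := by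
  obtain ⟨t0, ht0⟩ := hTne
  have himg : convexHull ℝ T =
      (fun q : (Fin (D + 1) → ℝ) × (Fin (D + 1) → Euc D) => ∑ i, q.1 i • q.2 i) ''
        ((stdSimplex ℝ (Fin (D + 1))) ×ˢ (Set.univ.pi fun _ => T)) := by
    apply Subset.antisymm
    · intro x hx
      obtain ⟨w, p, h0, h1, hp, hc⟩ := pad_rep T ht0 hx
      exact ⟨(w, p), ⟨⟨h0, h1⟩, fun i _ => hp i⟩, hc⟩
    · rintro x ⟨⟨w, p⟩, ⟨⟨h0, h1⟩, hp⟩, rfl⟩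
      exact (convex_convexHull ℝ T).sum_mem (fun i _ => h0 i) h1
        (fun i _ => subset_convexHull ℝ T (hp i (mem_univ i)))
  rw [himg]
  exact (((isCompact_stdSimplex (𝕜 := ℝ) (ι := Fin (D + 1))).prod (isCompact_univ_pi fun _ => hT)).image (by fun_prop))
open RealInnerProductSpace in
set_option maxHeartbeats 1000000 in
lemma jung_thm (K : Set (Euc D)) (hK : IsCompact K) (hne : K.Nonempty) :
    ∃ z : Euc D, K ⊆ closedBall z (Real.sqrt (D / (2 * (D + 1))) * Metric.diam K) := by
  classical
  obtain ⟨x0, hx0⟩ := hne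
  have hne : K.Nonempty := ⟨x0, hx0⟩
  set d := Metric.diam K with hd
  set g : Euc D → ℝ := fun y => sSup ((fun x => dist y x) '' K) with hg
  have hbdd : ∀ y : Euc D, BddAbove ((fun x => dist y x) '' K) :=
    fun y => (hK.image (by fun_prop)).bddAbove
  have hgle : ∀ y, ∀ x ∈ K, dist y x ≤ g y := fun y x hx => le_csSup (hbdd y) ⟨x, hx, rfl⟩
  have hgatt : ∀ y : Euc D, ∃ x ∈ K, g y = dist y x := by
    intro y
    obtain ⟨x, hxK, hmax⟩ := hK.exists_isMaxOn ⟨x0, hx0⟩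
      (Continuous.continuousOn (f := fun x => dist y x) (by fun_prop))
    refine ⟨x, hxK, le_antisymm (csSup_le (hne.image _) ?_) (hgle y x hxK)⟩
    rintro b ⟨x', hx', rfl⟩
    exact hmax hx'
  have hlip : ∀ y y' : Euc D, g y ≤ g y' + dist y y' := by
    intro y y'
    apply csSup_le (hne.image _)
    rintro b ⟨x, hxK, rfl⟩
    calc dist y x ≤ dist y y' + dist y' x := dist_triangle _ _ _
      _ ≤ dist y y' + g y' := by linarith [hgle y' x hxK]
      _ = g y' + dist y y' := add_comm _ _
  have hgcont : Continuous g := by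
    apply LipschitzWith.continuous (K := 1)
    apply LipschitzWith.of_dist_le_mul
    intro y y'
    rw [Real.dist_eq]
    simp only [NNReal.coe_one, one_mul]
    rw [abs_sub_le_iff]
    constructor
    · linarith [hlip y y']
    · have := hlip y' y
      rw [dist_comm] at this
      linarith
  have hd0 : 0 ≤ d := Metric.diam_nonneg
  obtain ⟨c, hcC, hcmin⟩ := (isCompact_closedBall x0 d).exists_isMinOn
      ⟨x0, Metric.mem_closedBall_self hd0⟩ hgcont.continuousOn
  have hgx0 : g x0 ≤ d := by
    apply csSup_le (hne.image _)
    rintro b ⟨x, hxK, rfl⟩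
    exact Metric.dist_le_diam_of_mem hK.isBounded hx0 hxK
  have hmin : ∀ y, g c ≤ g y := by
    intro y
    by_cases hy : y ∈ closedBall x0 d
    · exact hcmin hy
    · have h1 : d < dist y x0 := by
        rw [Metric.mem_closedBall] at hy; linarith [not_le.mp hy]
      have h2 : g c ≤ g x0 := hcmin (Metric.mem_closedBall_self hd0)
      have h3 : dist y x0 ≤ g y := hgle y x0 hx0
      linarith
  set R := g c with hRdef
  have hR0 : 0 ≤ R := le_trans dist_nonneg (hgle c x0 hx0)
  have hKR : K ⊆ closedBall c R := fun x hx => by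
    rw [Metric.mem_closedBall, dist_comm]; exact hgle c x hx
  suffices hfin : R ≤ Real.sqrt (D / (2 * (D + 1))) * d by
    exact ⟨c, fun x hx => (closedBall_subset_closedBall hfin) (hKR hx)⟩
  set T := {x | x ∈ K ∧ dist c x = R} with hT
  have hTsub : T ⊆ K := fun x hx => hx.1
  have hTco : IsCompact T := by
    have hTeq : T = K ∩ {x | dist c x = R} := rfl
    rw [hTeq]
    exact hK.inter_right (isClosed_eq (by fun_prop) continuous_const)
  have hTne : T.Nonempty := by
    obtain ⟨x, hxK, hxd⟩ := hgatt c
    exact ⟨x, hxK, hxd.symm⟩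
  -- Claim: the center is in the convex hull of the touching points.
  have hcT : c ∈ convexHull ℝ T := by
    rcases hR0.eq_or_lt with h0 | hRpos
    · -- R = 0 : K = {c}
      obtain ⟨t, htK, htd⟩ := hTne
      have : t = c := by
        rw [← h0] at htd
        rw [← dist_eq_zero, dist_comm]; exact htd
      subst this
      exact subset_convexHull ℝ T ⟨htK, htd⟩
    by_contra hc
    obtain ⟨f, u, hfu, huc⟩ := geometric_hahn_banach_closed_point (convex_convexHull ℝ T)
      (isCompact_convexHull_euc hTco hTne).isClosed hc
    set δ := f c - u with hδ
    have hδpos : 0 < δ := sub_pos.mpr huc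
    have hfT : ∀ t ∈ T, f t < u := fun t ht => hfu t (subset_convexHull ℝ T ht)
    set v := (InnerProductSpace.toDual ℝ (Euc D)).symm f with hv
    have hvf : ∀ y : Euc D, ⟪v, y⟫ = f y := fun y => InnerProductSpace.toDual_symm_apply
    have hvne : v ≠ 0 := by
      intro h0
      obtain ⟨t, ht⟩ := hTne
      have h1 : f t = 0 := by rw [← hvf t, h0, inner_zero_left]
      have h2 : f c = 0 := by rw [← hvf c, h0, inner_zero_left]
      have := hfT t ht
      linarith
    have hvpos : 0 < ‖v‖ := norm_pos_iff.mpr hvne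
    clear_value v
    set A := {x | x ∈ K ∧ u ≤ f x} with hA
    have hAco : IsCompact A := by
      have hAeq : A = K ∩ {x | u ≤ f x} := rfl
      rw [hAeq]
      exact hK.inter_right (isClosed_le continuous_const f.continuous)
    obtain ⟨R', hR'lt, hR'A⟩ : ∃ R', R' < R ∧ ∀ x ∈ A, dist c x ≤ R' := by
      rcases A.eq_empty_or_nonempty with hemp | hAne
      · exact ⟨R / 2, by linarith, fun x hx => by rw [hemp] at hx; exact absurd hx (by simp)⟩
      · obtain ⟨a, haA, hamax⟩ := hAco.exists_isMaxOn hAne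
          (Continuous.continuousOn (f := fun x => dist c x) (by fun_prop))
        refine ⟨dist c a, ?_, fun x hx => hamax hx⟩
        rcases (hgle c a haA.1).lt_or_eq with h | h
        · exact h
        · exfalso
          have haT : a ∈ T := ⟨haA.1, h⟩
          linarith [hfT a haT, haA.2]
    set s := min (δ / (2 * ‖v‖ ^ 2)) ((R - R') / (2 * ‖v‖)) with hs
    have hspos : 0 < s := lt_min (by positivity) (by
      have : 0 < R - R' := by linarith
      positivity)
    clear_value s
    set c' := c - s • v with hc'
    have hlt : g c' < R := by
      obtain ⟨x, hxK, hgc'⟩ := hgatt c'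
      rw [hgc']
      by_cases hxA : x ∈ A
      · have hdcc : dist c' c = s * ‖v‖ := by
          rw [dist_eq_norm, hc']
          simp [norm_smul, abs_of_pos hspos]
        have hsv : s * ‖v‖ ≤ (R - R') / 2 := by
          have h1 : s ≤ (R - R') / (2 * ‖v‖) := by rw [hs]; exact min_le_right _ _
          rw [le_div_iff₀ (by positivity)] at h1
          linarith
        calc dist c' x ≤ dist c' c + dist c x := dist_triangle _ _ _
          _ ≤ s * ‖v‖ + R' := add_le_add hdcc.le (hR'A x hxA)
          _ < R := by linarith
      · have hfx : f x < u := by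
          by_contra h
          exact hxA ⟨hxK, not_lt.mp h⟩
        have hip : ⟪x - c, v⟫ < -δ := by
          have h1 : ⟪v, x - c⟫ = f x - f c := by rw [inner_sub_right, hvf, hvf]
          rw [real_inner_comm, h1]
          linarith
        have hxc : ‖x - c‖ ≤ R := by
          rw [← dist_eq_norm, dist_comm]
          exact hgle c x hxK
        have hexp : ‖x - c'‖ ^ 2 = ‖x - c‖ ^ 2 + 2 * s * ⟪x - c, v⟫ + s ^ 2 * ‖v‖ ^ 2 := by
          have hxc' : x - c' = (x - c) + s • v := by rw [hc']; abel
          rw [hxc', norm_add_sq_real, real_inner_smul_right, norm_smul]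
          simp [abs_of_pos hspos]
          ring
        have hsd : s * ‖v‖ ^ 2 ≤ δ / 2 := by
          have h1 : s ≤ δ / (2 * ‖v‖ ^ 2) := by rw [hs]; exact min_le_left _ _
          rw [le_div_iff₀ (by positivity)] at h1
          linarith
        have hsq : ‖x - c'‖ ^ 2 < R ^ 2 := by
          have h2 : ‖x - c‖ ^ 2 ≤ R ^ 2 := by nlinarith [norm_nonneg (x - c)]
          have h3 : 2 * s * ⟪x - c, v⟫ < -2 * s * δ := by nlinarith
          have h4 : s ^ 2 * ‖v‖ ^ 2 ≤ s * (δ / 2) := by nlinarith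
          nlinarith
        have : dist c' x = ‖x - c'‖ := by rw [dist_comm, dist_eq_norm]
        rw [this]
        exact lt_of_pow_lt_pow_left₀ 2 hR0 hsq
    exact absurd (hmin c') (not_le.mpr hlt)
  -- Final algebra: Jung's inequality.
  obtain ⟨t0, ht0⟩ := hTne
  obtain ⟨w, p, hw0, hw1, hpT, hwp⟩ := pad_rep T ht0 hcT
  have hdist : ∀ i, dist c (p i) = R := fun i => (hpT i).2
  have hzero : ∑ i, w i • (p i - c) = 0 := by
    have h1 : ∑ i, w i • (p i - c) = (∑ i, w i • p i) - (∑ i, w i) • c := by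
      rw [Finset.sum_smul, ← Finset.sum_sub_distrib]
      congr 1
      ext i
      rw [smul_sub]
    rw [h1, hwp, hw1, one_smul, sub_self]
  have hkey : ∀ j, 2 * R ^ 2 ≤ (1 - w j) * d ^ 2 := by
    intro j
    have h1 : ∑ i, w i * ⟪p i - c, p j - c⟫ = 0 := by
      have hswap : ⟪∑ i, w i • (p i - c), p j - c⟫ = ∑ i, w i * ⟪p i - c, p j - c⟫ := by
        rw [sum_inner]
        exact Finset.sum_congr rfl fun i _ => real_inner_smul_left _ _ _
      rw [← hswap, hzero, inner_zero_left]
    have h2 : ∀ i, ‖p i - p j‖ ^ 2 = 2 * R ^ 2 - 2 * ⟪p i - c, p j - c⟫ := by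
      intro i
      have hdiff : p i - p j = (p i - c) - (p j - c) := by abel
      have hi : ‖p i - c‖ = R := by rw [← dist_eq_norm, dist_comm]; exact hdist i
      have hj : ‖p j - c‖ = R := by rw [← dist_eq_norm, dist_comm]; exact hdist j
      rw [hdiff, norm_sub_sq_real, hi, hj]
      ring
    have h3 : ∑ i, w i * ‖p i - p j‖ ^ 2 = 2 * R ^ 2 := by
      calc ∑ i, w i * ‖p i - p j‖ ^ 2
          = ∑ i, (w i * (2 * R ^ 2) - 2 * (w i * ⟪p i - c, p j - c⟫)) :=
            Finset.sum_congr rfl fun i _ => by rw [h2 i]; ring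
        _ = (∑ i, w i) * (2 * R ^ 2) - 2 * ∑ i, w i * ⟪p i - c, p j - c⟫ := by
            rw [Finset.sum_sub_distrib, ← Finset.sum_mul, Finset.mul_sum]
        _ = 2 * R ^ 2 := by rw [hw1, h1]; ring
    have h4 : ∑ i, w i * ‖p i - p j‖ ^ 2 ≤ (1 - w j) * d ^ 2 := by
      have hj0 : w j * ‖p j - p j‖ ^ 2 = 0 := by simp
      have hstep : ∑ i ∈ Finset.univ.erase j, w i * ‖p i - p j‖ ^ 2
          ≤ ∑ i ∈ Finset.univ.erase j, w i * d ^ 2 := by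
        apply Finset.sum_le_sum
        intro i _
        apply mul_le_mul_of_nonneg_left _ (hw0 i)
        have hle : ‖p i - p j‖ ≤ d := by
          rw [← dist_eq_norm]
          exact Metric.dist_le_diam_of_mem hK.isBounded (hTsub (hpT i)) (hTsub (hpT j))
        exact pow_le_pow_left₀ (norm_nonneg _) hle 2
      calc ∑ i, w i * ‖p i - p j‖ ^ 2
          = ∑ i ∈ Finset.univ.erase j, w i * ‖p i - p j‖ ^ 2 :=
            (Finset.sum_erase (f := fun i => w i * ‖p i - p j‖ ^ 2) Finset.univ hj0).symm
        _ ≤ ∑ i ∈ Finset.univ.erase j, w i * d ^ 2 := hstep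
        _ = (1 - w j) * d ^ 2 := by
            rw [← Finset.sum_mul, Finset.sum_erase_eq_sub (Finset.mem_univ j), hw1]
    linarith [h3, h4]
  -- sum the key inequality against the weights
  have hD1 : (0:ℝ) < (D : ℝ) + 1 := by positivity
  have h5 : 2 * R ^ 2 ≤ (1 - ∑ j, (w j) ^ 2) * d ^ 2 := by
    have hs := Finset.sum_le_sum (fun j (_ : j ∈ Finset.univ) =>
      mul_le_mul_of_nonneg_left (hkey j) (hw0 j))
    calc 2 * R ^ 2 = ∑ j, w j * (2 * R ^ 2) := by rw [← Finset.sum_mul, hw1, one_mul]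
      _ ≤ ∑ j, w j * ((1 - w j) * d ^ 2) := hs
      _ = (1 - ∑ j, (w j) ^ 2) * d ^ 2 := by
          rw [Finset.sum_congr rfl (fun j _ => by ring :
            ∀ j ∈ Finset.univ, w j * ((1 - w j) * d ^ 2) = w j * d ^ 2 - (w j) ^ 2 * d ^ 2),
            Finset.sum_sub_distrib, ← Finset.sum_mul, ← Finset.sum_mul, hw1]
          ring
  have h6 : 1 / ((D : ℝ) + 1) ≤ ∑ j, (w j) ^ 2 := by
    have hcs := sq_sum_le_card_mul_sum_sq (s := Finset.univ) (f := w)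
    rw [hw1] at hcs
    simp only [Finset.card_univ, Fintype.card_fin, one_pow] at hcs
    rw [div_le_iff₀ hD1]
    push_cast at hcs ⊢
    linarith
  have h7 : R ^ 2 ≤ (D / (2 * ((D : ℝ) + 1))) * d ^ 2 := by
    have hmul := mul_le_mul_of_nonneg_right h6 (sq_nonneg d)
    have h9 : 2 * R ^ 2 ≤ (1 - 1 / ((D : ℝ) + 1)) * d ^ 2 := by nlinarith [h5, hmul]
    have h10 : (1 - 1 / ((D : ℝ) + 1)) * d ^ 2
        = 2 * ((D : ℝ) / (2 * ((D : ℝ) + 1)) * d ^ 2) := by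
      field_simp
      ring
    linarith
  calc R ≤ Real.sqrt ((D / (2 * ((D : ℝ) + 1))) * d ^ 2) :=
        (Real.le_sqrt hR0 (by positivity)).mpr h7
    _ = Real.sqrt (D / (2 * ((D : ℝ) + 1))) * d := by
        rw [Real.sqrt_mul (by positivity), Real.sqrt_sq hd0]

section Proj

variable (K : Set (Euc D)) (hK : IsCompact K) (hne : K.Nonempty)

/-- A choice of nearest point on K. -/
def projK (y : Euc D) : Euc D := (hK.exists_infDist_eq_dist hne y).choose

variable {K}

lemma projK_mem (y : Euc D) : projK K hK hne y ∈ K :=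
  (hK.exists_infDist_eq_dist hne y).choose_spec.1

lemma projK_dist (y : Euc D) : Metric.infDist y K = dist y (projK K hK hne y) :=
  (hK.exists_infDist_eq_dist hne y).choose_spec.2

lemma projK_unique {y p : Euc D} (hy : y ∉ medialAxis K) (hp : p ∈ K)
    (hd : dist p y = Metric.infDist y K) : p = projK K hK hne y := by
  by_contra hne'
  exact hy ⟨p, hp, projK K hK hne y, projK_mem hK hne y, hne',
    hd, by rw [dist_comm]; exact (projK_dist hK hne y).symm⟩

lemma projK_continuousOn {S : Set (Euc D)} (hS : ∀ y ∈ S, y ∉ medialAxis K) :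
    ContinuousOn (projK K hK hne) S := by
  intro y hy
  rw [ContinuousWithinAt, Filter.tendsto_iff_seq_tendsto]
  intro u hu
  have hu' : Filter.Tendsto u Filter.atTop (nhds y) := hu.mono_right nhdsWithin_le_nhds
  apply Filter.tendsto_of_subseq_tendsto
  intro ns hns
  obtain ⟨p, hpK, ms, hms, hmt⟩ := hK.tendsto_subseq
    (x := fun n => projK K hK hne (u (ns n))) (fun n => projK_mem hK hne _)
  refine ⟨ms, ?_⟩
  have hyu : Filter.Tendsto (fun n => u (ns (ms n))) Filter.atTop (nhds y) :=
    hu'.comp (hns.comp hms.tendsto_atTop)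
  have h1 : Filter.Tendsto
      (fun n => dist (u (ns (ms n))) (projK K hK hne (u (ns (ms n))))) Filter.atTop
      (nhds (dist y p)) := hyu.dist hmt
  have h2 : Filter.Tendsto
      (fun n => dist (u (ns (ms n))) (projK K hK hne (u (ns (ms n))))) Filter.atTop
      (nhds (Metric.infDist y K)) := by
    have : Filter.Tendsto (fun n => Metric.infDist (u (ns (ms n))) K) Filter.atTop
        (nhds (Metric.infDist y K)) :=
      ((continuous_infDist_pt K).tendsto y).comp hyu
    simpa only [projK_dist hK hne] using this
  have hdp : dist p y = Metric.infDist y K := by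
    rw [dist_comm]; exact tendsto_nhds_unique h1 h2
  have := projK_unique hK hne (hS y hy) hpK hdp
  rw [← this]
  exact hmt

end Proj

/-- Proposition `thm:geometry:reach_vs_diameter`.
If `K ⊂ ℝ^D` is a nonempty compact set which is not contractible, then
`τ_K ≤ sqrt (D / (2 (D+1))) * diam K`. -/
theorem reach_le_sqrt_mul_diam (K : Set (Euc D)) (hK : IsCompact K) (hne : K.Nonempty)
    (hcontr : ¬ ContractibleSpace K) :
    reach K ≤ ENNReal.ofReal (Real.sqrt (D / (2 * (D + 1))) * Metric.diam K) := by
  by_contra h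
  push_neg at h
  set R : ℝ := Real.sqrt (D / (2 * (D + 1))) * Metric.diam K with hR
  have hR0 : 0 ≤ R := mul_nonneg (Real.sqrt_nonneg _) Metric.diam_nonneg
  -- points within distance R of K are not on the medial axis
  have hS : ∀ y : Euc D, Metric.infDist y K ≤ R → y ∉ medialAxis K := by
    intro y hyR hymed
    have h1 : reach K ≤ ENNReal.ofReal (Metric.infDist y K) := by
      exact iInf₂_le y hymed
    exact absurd (h1.trans (ENNReal.ofReal_le_ofReal hyR)) (not_le.mpr h)
  obtain ⟨z, hz⟩ := jung_thm K hK hne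
  rw [← hR] at hz
  apply hcontr
  rw [contractible_iff_id_nullhomotopic]
  refine ⟨⟨projK K hK hne z, projK_mem hK hne z⟩, ?_⟩
  -- the straight-line-then-project homotopy
  have hproj : ContinuousOn (projK K hK hne) {y : Euc D | Metric.infDist y K ≤ R} :=
    projK_continuousOn hK hne (fun y hy => hS y hy)
  have hgc : Continuous (fun p : (unitInterval × K) =>
      (1 - (p.1 : ℝ)) • (p.2 : Euc D) + (p.1 : ℝ) • z) := by fun_prop
  have hmaps : ∀ p : (unitInterval × K),
      ((1 - (p.1 : ℝ)) • (p.2 : Euc D) + (p.1 : ℝ) • z) ∈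
        {y : Euc D | Metric.infDist y K ≤ R} := by
    rintro ⟨t, x, hx⟩
    have hxz : dist (x : Euc D) z ≤ R := by
      have := hz hx; rwa [Metric.mem_closedBall] at this
    have h1 : Metric.infDist ((1 - (t : ℝ)) • (x : Euc D) + (t : ℝ) • z) K ≤
        dist ((1 - (t : ℝ)) • (x : Euc D) + (t : ℝ) • z) (x : Euc D) :=
      Metric.infDist_le_dist_of_mem hx
    have h2 : (1 - (t : ℝ)) • (x : Euc D) + (t : ℝ) • z - (x : Euc D)
        = (t : ℝ) • (z - (x : Euc D)) := by
      simp [smul_sub, sub_smul, one_smul]; abel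
    have h3 : dist ((1 - (t : ℝ)) • (x : Euc D) + (t : ℝ) • z) (x : Euc D)
        = (t : ℝ) * dist z (x : Euc D) := by
      rw [dist_eq_norm, h2, norm_smul, Real.norm_of_nonneg t.2.1, dist_eq_norm]
    refine mem_setOf.mpr (h1.trans ?_)
    rw [h3]
    calc (t : ℝ) * dist z (x : Euc D) ≤ 1 * dist z (x : Euc D) := by
          apply mul_le_mul_of_nonneg_right t.2.2 dist_nonneg
      _ = dist (x : Euc D) z := by rw [one_mul, dist_comm]
      _ ≤ R := hxz
  have hcont : Continuous (fun p : (unitInterval × K) =>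
      projK K hK hne ((1 - (p.1 : ℝ)) • (p.2 : Euc D) + (p.1 : ℝ) • z)) :=
    hproj.comp_continuous hgc hmaps
  constructor
  refine ⟨⟨fun p => ⟨projK K hK hne ((1 - (p.1 : ℝ)) • (p.2 : Euc D) + (p.1 : ℝ) • z),
      projK_mem hK hne _⟩, by continuity⟩, ?_, ?_⟩
  · intro x
    have harg : (1 - ((0 : unitInterval) : ℝ)) • (x : Euc D) + ((0 : unitInterval) : ℝ) • z
        = (x : Euc D) := by norm_num
    have hx0 : (x : Euc D) ∉ medialAxis K := by
      apply hS
      rw [Metric.infDist_zero_of_mem x.2]; exact hR0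
    have hpx : (x : Euc D) = projK K hK hne (x : Euc D) :=
      projK_unique hK hne hx0 x.2 (by rw [dist_self, Metric.infDist_zero_of_mem x.2])
    show (⟨projK K hK hne _, _⟩ : K) = x
    apply Subtype.ext
    show projK K hK hne ((1 - ((0 : unitInterval) : ℝ)) • (x : Euc D)
        + ((0 : unitInterval) : ℝ) • z) = (x : Euc D)
    rw [harg]
    exact hpx.symm
  · intro x
    have harg : (1 - ((1 : unitInterval) : ℝ)) • (x : Euc D) + ((1 : unitInterval) : ℝ) • z
        = z := by norm_num
    apply Subtype.ext
    show projK K hK hne ((1 - ((1 : unitInterval) : ℝ)) • (x : Euc D)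
        + ((1 : unitInterval) : ℝ) • z) = projK K hK hne z
    rw [harg]

end
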